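/- arXiv:1101.5621 — 5 statements merged into one kernel-verified Lean document; each statement's English description precedes it below -/
import Mathlib

section
/- In any (possibly infinite) matroid, the relation on the ground set defined by 'x ~ y if and only if x = y or some circuit contains both x and y' is transitive (hence an equivalence relation). -/
open Set Matroid

variable {α : Type*}

/-- A circuit of a (possibly infinite) matroid: a minimal dependent set. -/
def Circuit (M : Matroid α) (C : Set α) : Prop :=
  M.Dep C ∧ ∀ C' ⊂ C, ¬ M.Dep C'

/-- A cocircuit: a circuit of the dual matroid. -/
def Cocircuit (M : Matroid α) (D : Set α) : Prop :=
  Circuit M✶ D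

/-- Deletion of the set `D` from the matroid `M`. -/
def delete (M : Matroid α) (D : Set α) : Matroid α :=
  M ↾ (M.E \ D)

/-- Contraction of the set `C` in the matroid `M`, i.e. `M/C = (M✶ − C)✶`. -/
def contract (M : Matroid α) (C : Set α) : Matroid α :=
  (_root_.delete M✶ C)✶

/-- `del M I J` : the minimum cardinality of a finite `F ⊆ I ∪ J` with
`(I ∪ J) \ F` independent in `M`, or `∞` if no such finite set exists. -/
noncomputable def del (M : Matroid α) (I J : Set α) : ℕ∞ :=
  sInf {n : ℕ∞ | ∃ F : Set α, F.Finite ∧ F ⊆ I ∪ J ∧ M.Indep ((I ∪ J) \ F) ∧ n = F.encard}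

/-- The connectivity function `κ_M(X)`, defined via `del` on bases of `M|X`
and `M|(E \ X)` (its value does not depend on the choice of bases). -/
noncomputable def conn (M : Matroid α) (X : Set α) : ℕ∞ :=
  ⨅ B ∈ {B | (M ↾ X).IsBase B}, ⨅ B' ∈ {B' | (M ↾ (M.E \ X)).IsBase B'}, del M B B'

/-- `κ_M(X,Y) = min {κ_M(U) : X ⊆ U ⊆ E(M) \ Y}`. -/
noncomputable def connBtw (M : Matroid α) (X Y : Set α) : ℕ∞ :=
  ⨅ U ∈ {U | X ⊆ U ∧ U ⊆ M.E \ Y}, conn M U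

/-- `x ~ y` iff `x = y` or some circuit contains both `x` and `y`. -/
def ConnRel (M : Matroid α) (x y : α) : Prop :=
  x = y ∨ ∃ C, Circuit M C ∧ x ∈ C ∧ y ∈ C

/-! ### Auxiliary lemmas -/

lemma Circuit.diff_singleton_indep {M : Matroid α} {C : Set α} {e : α} (hC : Circuit M C)
    (he : e ∈ C) : M.Indep (C \ {e}) := by
  have h := hC.2 (C \ {e}) (Set.sdiff_singleton_ssubset.2 he)
  exact indep_of_not_dep h (diff_subset.trans hC.1.subset_ground)

lemma Circuit.mem_closure_diff {M : Matroid α} {C : Set α} {e : α} (hC : Circuit M C)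
    (he : e ∈ C) : e ∈ M.closure (C \ {e}) := by
  have hi := hC.diff_singleton_indep he
  have hdep : M.Dep (insert e (C \ {e})) := by
    rw [insert_diff_singleton, insert_eq_of_mem he]
    exact hC.1
  exact ((hi.insert_dep_iff).1 hdep).1

/-- Fundamental circuit: if `e ∈ cl(I) \ I` with `I` independent, there is a circuit
through `e` inside `insert e I`. -/
lemma exists_circuit_of_mem_closure {M : Matroid α} {I : Set α} {e : α} (hI : M.Indep I)
    (he : e ∈ M.closure I) (heI : e ∉ I) :
    ∃ C, Circuit M C ∧ e ∈ C ∧ C ⊆ insert e I := by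
  set J : Set α := {f ∈ I | e ∈ M.closure (I \ {f})} with hJdef
  have heJ : e ∈ M.closure (I \ J) := by
    by_cases hne : J.Nonempty
    · have hsInter : (⋂ f ∈ J, (I \ {f})) = I \ J := by
        ext a
        simp only [mem_iInter, mem_diff, mem_singleton_iff]
        constructor
        · intro h
          obtain ⟨f0, hf0⟩ := hne
          exact ⟨(h f0 hf0).1, fun haJ => (h a haJ).2 rfl⟩
        · intro h f hf
          exact ⟨h.1, fun hafeq => h.2 (by rw [hafeq]; exact hf)⟩
      have hcl := hI.closure_sInter_eq_biInter_closure_of_forall_subset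
        (Js := (fun f => I \ {f}) '' J) (hne.image _)
        (by rintro _ ⟨f, hf, rfl⟩; exact diff_subset)
      rw [sInter_image] at hcl
      rw [biInter_image] at hcl
      rw [hsInter] at hcl
      rw [hcl, mem_iInter₂]
      intro f hf
      exact hf.2
    · rw [not_nonempty_iff_eq_empty] at hne
      rw [hne, diff_empty]
      exact he
  have hIJind : M.Indep (I \ J) := hI.subset diff_subset
  have heIJ : e ∉ I \ J := fun h => heI h.1
  have hdep : M.Dep (insert e (I \ J)) := (hIJind.insert_dep_iff).2 ⟨heJ, heIJ⟩
  refine ⟨insert e (I \ J), ⟨hdep, ?_⟩, mem_insert _ _, insert_subset_insert diff_subset⟩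
  intro C' hC'
  obtain ⟨g, hgC, hgC'⟩ := exists_of_ssubset hC'
  have hC'sub : C' ⊆ (insert e (I \ J)) \ {g} := subset_diff_singleton hC'.subset hgC'
  have hind : M.Indep ((insert e (I \ J)) \ {g}) := by
    rcases eq_or_ne g e with rfl | hge
    · refine hI.subset ?_
      intro a ha
      rcases ha.1 with rfl | h
      · exact absurd rfl ha.2
      · exact h.1
    · have hgI : g ∈ I \ J := by
        rcases hgC with rfl | h
        · exact absurd rfl hge
        · exact h
      have hsub : (insert e (I \ J)) \ {g} ⊆ insert e (I \ {g}) := by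
        intro a ha
        rcases ha.1 with rfl | h
        · exact mem_insert _ _
        · exact mem_insert_of_mem _ ⟨h.1, ha.2⟩
      have hnot : e ∉ M.closure (I \ {g}) := fun hcl => hgI.2 ⟨hgI.1, hcl⟩
      have hins : M.Indep (insert e (I \ {g})) :=
        ((hI.subset diff_subset).insert_indep_iff_of_notMem (fun h => heI h.1)).2
          ⟨M.mem_ground_of_mem_closure he, hnot⟩
      exact hins.subset hsub
  exact (hind.subset hC'sub).not_dep

/-- Uniqueness of the circuit inside `insert e I` for `I` independent. -/
lemma circuit_eq_of_subset_insert_indep {M : Matroid α} {I D₁ D₂ : Set α} {e : α}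
    (hI : M.Indep I) (hD₁ : Circuit M D₁) (hD₂ : Circuit M D₂)
    (h₁ : D₁ ⊆ insert e I) (h₂ : D₂ ⊆ insert e I) : D₁ = D₂ := by
  by_contra hne
  have he₂ : e ∈ D₂ := by
    by_contra h
    have hsub : D₂ ⊆ I := fun a ha => ((h₂ ha).resolve_left (fun hae => h (hae ▸ ha)))
    exact (hI.subset hsub).not_dep hD₂.1
  obtain ⟨g, hg₁, hg₂⟩ : ∃ g, g ∈ D₁ ∧ g ∉ D₂ := by
    by_contra h
    push_neg at h
    have hsub : D₁ ⊂ D₂ := ssubset_of_subset_of_ne h hne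
    exact (hD₂.2 D₁ hsub) hD₁.1
  have hge : g ≠ e := fun h => hg₂ (h ▸ he₂)
  have hgI : g ∈ I := (h₁ hg₁).resolve_left hge
  have heclg : e ∈ M.closure (I \ {g}) := by
    have h1 : e ∈ M.closure (D₂ \ {e}) := hD₂.mem_closure_diff he₂
    have h2 : D₂ \ {e} ⊆ I \ {g} := by
      intro a ha
      refine ⟨(h₂ ha.1).resolve_left ha.2, fun hag => hg₂ ?_⟩
      rw [mem_singleton_iff] at hag
      rw [← hag]
      exact ha.1
    exact M.closure_subset_closure h2 h1
  have hgcl : g ∈ M.closure (I \ {g}) := by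
    have h1 : g ∈ M.closure (D₁ \ {g}) := hD₁.mem_closure_diff hg₁
    have h2 : D₁ \ {g} ⊆ insert e (I \ {g}) := by
      intro a ha
      rcases h₁ ha.1 with rfl | h
      · exact mem_insert _ _
      · exact mem_insert_of_mem _ ⟨h, ha.2⟩
    have h3 : M.closure (insert e (I \ {g})) = M.closure (I \ {g}) :=
      M.closure_insert_eq_of_mem_closure heclg
    exact h3 ▸ (M.closure_subset_closure h2 h1)
  have hdep : M.Dep (insert g (I \ {g})) :=
    ((hI.subset diff_subset).insert_dep_iff).2 ⟨hgcl, fun h => h.2 rfl⟩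
  rw [insert_diff_singleton, insert_eq_of_mem hgI] at hdep
  exact hI.not_dep hdep

theorem stmt5 (M : Matroid α) (x y z : α) (hxy : ConnRel M x y) (hyz : ConnRel M y z) :
    ConnRel M x z := by
  rcases hxy with rfl | ⟨C₁, hC₁, hxC₁, hyC₁⟩
  · exact hyz
  rcases hyz with rfl | ⟨C₂, hC₂, hyC₂, hzC₂⟩
  · exact Or.inr ⟨C₁, hC₁, hxC₁, hyC₁⟩
  rcases eq_or_ne x z with rfl | hxz
  · exact Or.inl rfl
  by_cases hxC₂ : x ∈ C₂
  · exact Or.inr ⟨C₂, hC₂, hxC₂, hzC₂⟩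
  by_cases hzC₁ : z ∈ C₁
  · exact Or.inr ⟨C₁, hC₁, hxC₁, hzC₁⟩
  right
  have hC₁E := hC₁.1.subset_ground
  have hC₂E := hC₂.1.subset_ground
  set X : Set α := (C₁ ∪ C₂) \ {x, z} with hXdef
  have hXE : X ⊆ M.E := diff_subset.trans (union_subset hC₁E hC₂E)
  have hI1 : M.Indep (C₁ \ {x}) := hC₁.diff_singleton_indep hxC₁
  have hsub1 : C₁ \ {x} ⊆ X := by
    intro a ha
    refine ⟨Or.inl ha.1, ?_⟩
    rintro (rfl | rfl)
    · exact ha.2 rfl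
    · exact hzC₁ ha.1
  obtain ⟨K, hK, hK1⟩ := hI1.subset_isBasis_of_subset hsub1 hXE
  have hKind := hK.indep
  have hKsubX : K ⊆ X := hK.subset
  have hxK : x ∉ K := fun h => (hKsubX h).2 (mem_insert _ _)
  have hzK : z ∉ K := fun h => (hKsubX h).2 (mem_insert_of_mem _ rfl)
  -- `z ∈ cl K`
  have hz_clK : z ∈ M.closure K := by
    rw [hK.closure_eq_closure]
    have h1 : z ∈ M.closure (C₂ \ {z}) := hC₂.mem_closure_diff hzC₂
    have h2 : C₂ \ {z} ⊆ X := by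
      intro a ha
      refine ⟨Or.inr ha.1, ?_⟩
      rintro (rfl | rfl)
      · exact hxC₂ ha.1
      · exact ha.2 rfl
    exact M.closure_subset_closure h2 h1
  obtain ⟨D, hD, hzD, hDsub⟩ := exists_circuit_of_mem_closure hKind hz_clK hzK
  -- find `c ∈ D ∩ K ∩ C₁`
  obtain ⟨c, hcD, hcK, hcC₁⟩ : ∃ c, c ∈ D ∧ c ∈ K ∧ c ∈ C₁ := by
    by_contra hcon
    push_neg at hcon
    have hDC₂ : D ⊆ C₂ := by
      intro a ha
      rcases hDsub ha with rfl | haK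
      · exact hzC₂
      · rcases (hKsubX haK).1 with h1 | h2
        · exact absurd h1 (hcon a ha haK)
        · exact h2
    rcases eq_or_ssubset_of_subset hDC₂ with h | h
    · have hyD : y ∈ D := h ▸ hyC₂
      have hyK : y ∈ K := by
        rcases hDsub hyD with rfl | hk
        · exact absurd hyC₁ hzC₁
        · exact hk
      exact hcon y hyD hyK hyC₁
    · exact (hC₂.2 D h) hD.1
  have hcz : c ≠ z := fun h => hzK (h ▸ hcK)
  have hcx : c ≠ x := fun h => hxK (h ▸ hcK)
  -- `c ∈ cl (insert z (K \ {c}))`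
  have hcc : c ∈ M.closure (insert z (K \ {c})) := by
    have h1 : c ∈ M.closure (D \ {c}) := hD.mem_closure_diff hcD
    have h2 : D \ {c} ⊆ insert z (K \ {c}) := by
      intro a ha
      rcases hDsub ha.1 with rfl | haK
      · exact mem_insert _ _
      · exact mem_insert_of_mem _ ⟨haK, ha.2⟩
    exact M.closure_subset_closure h2 h1
  -- `x ∈ cl (insert z (K \ {c}))`
  have hx_cl : x ∈ M.closure (insert z (K \ {c})) := by
    have h1 : x ∈ M.closure (C₁ \ {x}) := hC₁.mem_closure_diff hxC₁
    have h2 : M.closure (insert z (K \ {c})) = M.closure (insert c (insert z (K \ {c}))) :=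
      (M.closure_insert_eq_of_mem_closure hcc).symm
    have h3 : C₁ \ {x} ⊆ insert c (insert z (K \ {c})) := by
      intro a ha
      by_cases hac : a = c
      · exact hac ▸ mem_insert _ _
      · exact mem_insert_of_mem _ (mem_insert_of_mem _ ⟨hK1 ha, hac⟩)
    rw [h2]
    exact M.closure_subset_closure h3 h1
  have hSE : insert z (K \ {c}) ⊆ M.E :=
    insert_subset (hC₂E hzC₂) ((diff_subset.trans hKsubX).trans hXE)
  obtain ⟨J, hJ⟩ := M.exists_isBasis (insert z (K \ {c})) hSE
  have hxJcl : x ∈ M.closure J := by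
    rw [hJ.closure_eq_closure]; exact hx_cl
  have hxJ : x ∉ J := by
    intro h
    rcases hJ.subset h with rfl | hk
    · exact hxz rfl
    · exact hxK hk.1
  obtain ⟨D', hD', hxD', hD'sub⟩ := exists_circuit_of_mem_closure hJ.indep hxJcl hxJ
  refine ⟨D', hD', hxD', ?_⟩
  by_contra hzD'
  -- then `D' ⊆ insert x K`, so `D' = C₁` by uniqueness, contradicting `c ∉ D'`.
  have hsub' : D' ⊆ insert x K := by
    intro a ha
    rcases hD'sub ha with rfl | haJ
    · exact mem_insert _ _
    · rcases hJ.subset haJ with rfl | hk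
      · exact absurd ha hzD'
      · exact mem_insert_of_mem _ hk.1
  have hC₁sub : C₁ ⊆ insert x K := by
    intro a ha
    by_cases hax : a = x
    · exact hax ▸ mem_insert _ _
    · exact mem_insert_of_mem _ (hK1 ⟨ha, hax⟩)
  have hDC : D' = C₁ := circuit_eq_of_subset_insert_indep hKind hD' hC₁ hsub' hC₁sub
  have hcD' : c ∈ D' := hDC ▸ hcC₁
  rcases hD'sub hcD' with rfl | hcJ
  · exact hcx rfl
  · rcases hJ.subset hcJ with rfl | hk
    · exact hcz rfl
    · exact hk.2 rfl
end

section
/- A matroid is both finitary and cofinitary if and only if it is a direct sum of finite matroids. -/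
open Set Matroid

variable {α : Type*}

namespace Circuit

variable {M : Matroid α} {C C' C₁ C₂ D I J B X Z : Set α} {e f x y z b : α}

lemma dep (h : Circuit M C) : M.Dep C := h.1

lemma subset_ground (h : Circuit M C) : C ⊆ M.E := h.1.subset_ground

lemma ssubset_indep (h : Circuit M C) (h' : C' ⊂ C) : M.Indep C' := by
  rw [← not_dep_iff (h'.subset.trans h.subset_ground)]; exact h.2 C' h'

lemma diff_singleton_indep_s8 (h : Circuit M C) (he : e ∈ C) : M.Indep (C \ {e}) :=
  h.ssubset_indep (sdiff_singleton_ssubset.2 he)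

lemma mem_closure_diff_s8 (h : Circuit M C) (he : e ∈ C) : e ∈ M.closure (C \ {e}) := by
  have hi := h.diff_singleton_indep_s8 he
  have hd : M.Dep (insert e (C \ {e})) := by
    rw [insert_diff_singleton, insert_eq_of_mem he]; exact h.dep
  exact (hi.insert_dep_iff.1 hd).1

lemma eq_of_subset (h₁ : Circuit M C₁) (h₂ : Circuit M C₂) (hsub : C₁ ⊆ C₂) : C₁ = C₂ := by
  by_contra hne
  exact (h₂.ssubset_indep (ssubset_of_ne_of_subset hne hsub)).not_dep h₁.dep

end Circuit

namespace StmtAux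

variable {M : Matroid α} {C C' C₁ C₂ D I J B X Z : Set α} {e f x y z b : α}

/-- F0: fundamental circuit existence. -/
lemma exists_circuit_of_mem_closure (hJ : M.Indep J) (hx : x ∈ M.closure J) (hxJ : x ∉ J) :
    ∃ C, Circuit M C ∧ x ∈ C ∧ C ⊆ insert x J := by
  have hxE : x ∈ M.E := M.closure_subset_ground J hx
  set S : Set (Set α) := {K | K ⊆ J ∧ x ∈ M.closure K} with hS
  have hJS : J ∈ S := ⟨Subset.rfl, hx⟩
  have hne : S.Nonempty := ⟨J, hJS⟩
  have hK₀J : ⋂₀ S ⊆ J := sInter_subset_of_mem hJS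
  have hxcl : x ∈ M.closure (⋂₀ S) := by
    rw [hJ.closure_sInter_eq_biInter_closure_of_forall_subset hne (fun K hK => hK.1)]
    exact mem_iInter₂.2 fun K hK => hK.2
  have hK₀ : M.Indep (⋂₀ S) := hJ.subset hK₀J
  have hxK₀ : x ∉ ⋂₀ S := fun h => hxJ (hK₀J h)
  refine ⟨insert x (⋂₀ S), ⟨hK₀.insert_dep_iff.2 ⟨hxcl, hxK₀⟩, ?_⟩,
    mem_insert _ _, insert_subset_insert hK₀J⟩
  intro C' hC'
  by_cases hxC' : x ∈ C'
  · have hK' : C' \ {x} ⊆ ⋂₀ S := by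
      intro w hw
      rcases hC'.subset hw.1 with h | h
      · exact absurd h hw.2
      · exact h
    have hne' : C' \ {x} ≠ ⋂₀ S := by
      intro h
      apply hC'.ne
      rw [← h, insert_diff_singleton, insert_eq_of_mem hxC']
    have hxcl' : x ∉ M.closure (C' \ {x}) := by
      intro hmem
      have hmemS : C' \ {x} ∈ S := ⟨hK'.trans hK₀J, hmem⟩
      exact hne' (subset_antisymm hK' (sInter_subset_of_mem hmemS))
    have hind : M.Indep (insert x (C' \ {x})) :=
      ((hK₀.subset hK').insert_indep_iff_of_notMem (by simp)).2 ⟨hxE, hxcl'⟩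
    rw [insert_diff_singleton, insert_eq_of_mem hxC'] at hind
    exact hind.not_dep
  · have : C' ⊆ ⋂₀ S := by
      intro w hw
      rcases hC'.subset hw with h | h
      · exact absurd h (by rintro rfl; exact hxC' hw)
      · exact h
    exact (hK₀.subset this).not_dep

/-- F1: every dependent set contains a circuit. -/
lemma exists_circuit_subset_of_dep (hD : M.Dep D) : ∃ C, Circuit M C ∧ C ⊆ D := by
  obtain ⟨J, hJ⟩ := M.exists_isBasis D hD.subset_ground
  have hJD : J ≠ D := by rintro rfl; exact hD.not_indep hJ.indep
  obtain ⟨x, hxD, hxJ⟩ := exists_of_ssubset (hJ.subset.ssubset_of_ne hJD)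
  obtain ⟨C, hC, -, hCsub⟩ :=
    exists_circuit_of_mem_closure hJ.indep (hJ.subset_closure hxD) hxJ
  exact ⟨C, hC, hCsub.trans (insert_subset hxD hJ.subset)⟩

/-- strong circuit elimination, restricted form. -/
lemma exists_circuit_elim (h₁ : Circuit M C₁) (h₂ : Circuit M C₂)
    (he : e ∈ C₁ ∩ C₂) (hf : f ∈ C₁ \ C₂) :
    ∃ C, Circuit M C ∧ f ∈ C ∧ C ⊆ (C₁ ∪ C₂) \ {e} := by
  set X := (C₁ ∪ C₂) \ {e} with hX
  have hfe : f ≠ e := by rintro rfl; exact hf.2 he.2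
  have hXE : X ⊆ M.E := diff_subset.trans (union_subset h₁.subset_ground h₂.subset_ground)
  have hsub2 : C₂ \ {e} ⊆ X \ {f} := by
    intro w hw
    exact ⟨⟨Or.inr hw.1, hw.2⟩, by rintro rfl; exact hf.2 hw.1⟩
  have hecl : e ∈ M.closure (X \ {f}) :=
    M.closure_subset_closure hsub2 (h₂.mem_closure_diff_s8 he.2)
  have hsub1 : C₁ \ {f} ⊆ insert e (X \ {f}) := by
    intro w hw
    by_cases hwe : w = e
    · exact Or.inl hwe
    · exact Or.inr ⟨⟨Or.inl hw.1, hwe⟩, hw.2⟩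
  have hfcl : f ∈ M.closure (X \ {f}) := by
    have h1 := (M.closure_subset_closure hsub1) (h₁.mem_closure_diff_s8 hf.1)
    rwa [closure_insert_eq_of_mem_closure hecl] at h1
  obtain ⟨J, hJ⟩ := M.exists_isBasis (X \ {f}) (diff_subset.trans hXE)
  have hfJ : f ∈ M.closure J := by rw [hJ.closure_eq_closure]; exact hfcl
  have hfnJ : f ∉ J := fun h => (hJ.subset h).2 rfl
  have hfX : f ∈ X := ⟨Or.inl hf.1, hfe⟩
  obtain ⟨C, hC, hfC, hCsub⟩ := exists_circuit_of_mem_closure hJ.indep hfJ hfnJ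
  exact ⟨C, hC, hfC, hCsub.trans (insert_subset hfX (hJ.subset.trans diff_subset))⟩

end StmtAux

namespace StmtAux

variable {M : Matroid α} {C C' C₁ C₂ D I J B X Z : Set α} {e f x y z b : α}

/-- uniqueness of the circuit inside `insert e B` for a base `B`. -/
lemma circuit_insert_base_unique (hB : M.IsBase B) (h₁ : Circuit M C₁) (h₂ : Circuit M C₂)
    (h₁s : C₁ ⊆ insert e B) (h₂s : C₂ ⊆ insert e B) (he₁ : e ∈ C₁) (he₂ : e ∈ C₂) :
    C₁ = C₂ := by
  by_contra hne
  have hf : ∃ f, f ∈ C₁ \ C₂ := by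
    by_contra h
    push_neg at h
    exact hne (h₁.eq_of_subset h₂ (fun w hw => by_contra fun hw2 => h w ⟨hw, hw2⟩))
  obtain ⟨f, hf⟩ := hf
  obtain ⟨C, hC, -, hCsub⟩ := exists_circuit_elim h₁ h₂ ⟨he₁, he₂⟩ hf
  have hCB : C ⊆ B := by
    intro w hw
    obtain ⟨hw1, hw2⟩ := hCsub hw
    rcases hw1 with h | h
    · rcases h₁s h with h' | h'
      · exact absurd h' hw2
      · exact h'
    · rcases h₂s h with h' | h'
      · exact absurd h' hw2
      · exact h'
  exact (hB.indep.subset hCB).not_dep hC.dep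

open Classical in
/-- the fundamental circuit of `e` with respect to a base `B`. -/
noncomputable def fundC (M : Matroid α) (B : Set α) (e : α) : Set α :=
  if h : ∃ C, Circuit M C ∧ e ∈ C ∧ C ⊆ insert e B then h.choose else ∅

lemma fundC_spec (hB : M.IsBase B) (he : e ∈ M.E \ B) :
    Circuit M (fundC M B e) ∧ e ∈ fundC M B e ∧ fundC M B e ⊆ insert e B := by
  have hcl : e ∈ M.closure B := by rw [hB.closure_eq]; exact he.1
  have h : ∃ C, Circuit M C ∧ e ∈ C ∧ C ⊆ insert e B :=
    exists_circuit_of_mem_closure hB.indep hcl he.2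
  rw [fundC, dif_pos h]
  exact h.choose_spec

/-- the fundamental cocircuit of `b ∈ B`. -/
def fundD (M : Matroid α) (B : Set α) (b : α) : Set α :=
  M.E \ M.closure (B \ {b})

lemma mem_fundD_self (hB : M.IsBase B) (hb : b ∈ B) : b ∈ fundD M B b :=
  ⟨hB.subset_ground hb, hB.indep.notMem_closure_sdiff_of_mem hb⟩

lemma fundD_inter_ground (hB : M.IsBase B) (hb : b ∈ B) (hy : y ∈ fundD M B b) (hyB : y ∈ B) :
    y = b := by
  by_contra hne
  exact hy.2 (M.subset_closure (B \ {b}) (diff_subset.trans hB.subset_ground) ⟨hyB, hne⟩)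

/-- F4: the fundamental cocircuit is a cocircuit. -/
lemma fundD_cocircuit (hB : M.IsBase B) (hb : b ∈ B) : Circuit M✶ (fundD M B b) := by
  have hDE : fundD M B b ⊆ M.E := diff_subset
  constructor
  · rw [dual_dep_iff_forall]
    refine ⟨fun B₀ hB₀ => ?_, hDE⟩
    by_contra hdisj
    rw [not_nonempty_iff_eq_empty] at hdisj
    have hB₀sub : B₀ ⊆ M.closure (B \ {b}) := by
      intro w hw
      by_contra hw2
      have : w ∈ fundD M B b ∩ B₀ := ⟨⟨hB₀.subset_ground hw, hw2⟩, hw⟩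
      rw [hdisj] at this
      exact this
    have : M.E ⊆ M.closure (B \ {b}) := by
      rw [← hB₀.closure_eq]
      exact closure_subset_closure_of_subset_closure hB₀sub
    exact (hB.indep.notMem_closure_sdiff_of_mem hb) (this (hB.subset_ground hb))
  · intro D' hD'
    have hD'E : D' ⊆ M✶.E := by rw [dual_ground]; exact hD'.subset.trans hDE
    rw [not_dep_iff hD'E]
    obtain ⟨z, hzD, hzD'⟩ := exists_of_ssubset hD'
    have hzE : z ∈ M.E := hzD.1
    have hzcl : z ∉ M.closure (B \ {b}) := hzD.2
    have hzB' : z ∉ B \ {b} := fun h =>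
      hzcl (M.subset_closure (B \ {b}) (diff_subset.trans hB.subset_ground) h)
    have hind : M.Indep (insert z (B \ {b})) :=
      ((hB.indep.subset diff_subset).insert_indep_iff_of_notMem hzB').2 ⟨hzE, hzcl⟩
    have hbcl : b ∈ M.closure (insert z (B \ {b})) := by
      have hz2 : z ∈ M.closure (insert b (B \ {b})) \ M.closure (B \ {b}) := by
        rw [insert_diff_singleton, insert_eq_of_mem hb, hB.closure_eq]
        exact ⟨hzE, hzcl⟩
      exact Matroid.closure_exchange hz2 |>.1
    have hsp : M.E ⊆ M.closure (insert z (B \ {b})) := by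
      rw [← hB.closure_eq]
      refine closure_subset_closure_of_subset_closure ?_
      intro w hw
      by_cases hwb : w = b
      · exact hwb ▸ hbcl
      · exact M.subset_closure _ hind.subset_ground (Or.inr ⟨hw, hwb⟩)
    have hbase : M.IsBase (insert z (B \ {b})) := hind.isBase_of_ground_subset_closure hsp
    rw [dual_indep_iff_exists (hD'.subset.trans hDE)]
    refine ⟨insert z (B \ {b}), hbase, ?_⟩
    rw [disjoint_left]
    rintro w hwD' (rfl | hwB)
    · exact hzD' hwD'
    · exact (hD'.subset hwD').2 (M.subset_closure (B \ {b})
        (diff_subset.trans hB.subset_ground) hwB)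

/-- F5: a circuit and a cocircuit never meet in exactly one element. -/
lemma circuit_cocircuit_second (hC : Circuit M C) (hD : Circuit M✶ D) (hz : z ∈ C ∩ D) :
    ∃ w, w ∈ C ∩ D ∧ w ≠ z := by
  by_contra h
  push_neg at h
  have hCD : C ∩ D ⊆ {z} := fun w hw => h w hw
  have hDE : D ⊆ M.E := hD.subset_ground
  have h1 : M✶.Indep (D \ {z}) := hD.diff_singleton_indep_s8 hz.2
  obtain ⟨B₀, hB₀, hdisj⟩ := (dual_indep_iff_exists (diff_subset.trans hDE)).1 h1
  have hzB₀ : z ∈ B₀ := by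
    by_contra hzB
    have hDdisj : Disjoint D B₀ := by
      rw [disjoint_left]
      intro w hwD hwB₀
      by_cases hwz : w = z
      · exact hzB (hwz ▸ hwB₀)
      · exact hdisj.ne_of_mem ⟨hwD, hwz⟩ hwB₀ rfl
    exact hD.dep.not_indep ((dual_indep_iff_exists hDE).2 ⟨B₀, hB₀, hDdisj⟩)
  set W := (B₀ \ {z}) ∪ (C \ {z}) with hW
  have hWE : W ⊆ M.E :=
    union_subset (diff_subset.trans hB₀.subset_ground) (diff_subset.trans hC.subset_ground)
  have hzW : z ∈ M.closure W :=
    M.closure_subset_closure subset_union_right (hC.mem_closure_diff_s8 hz.1)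
  have hsp : M.E ⊆ M.closure W := by
    rw [← hB₀.closure_eq]
    refine closure_subset_closure_of_subset_closure ?_
    intro w hw
    by_cases hwz : w = z
    · exact hwz ▸ hzW
    · exact M.subset_closure W hWE (Or.inl ⟨hw, hwz⟩)
  obtain ⟨B₁, hB₁, hB₁W⟩ := ((spanning_iff_ground_subset_closure hWE).2 hsp).exists_isBase_subset
  have hdisj1 : Disjoint D B₁ := by
    rw [disjoint_left]
    intro w hwD hwB₁
    rcases hB₁W hwB₁ with h' | h'
    · exact hdisj.ne_of_mem ⟨hwD, h'.2⟩ h'.1 rfl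
    · exact h'.2 (hCD ⟨h'.1, hwD⟩)
  exact hD.dep.not_indep ((dual_indep_iff_exists hDE).2 ⟨B₁, hB₁, hdisj1⟩)

/-- F3: membership equivalence between fundamental circuits and cocircuits. -/
lemma mem_fundC_iff (hB : M.IsBase B) (he : e ∈ M.E \ B) (hb : b ∈ B) :
    b ∈ fundC M B e ↔ e ∈ fundD M B b := by
  obtain ⟨hCe, heCe, hCes⟩ := fundC_spec hB he
  constructor
  · intro hbC
    refine ⟨he.1, fun hecl => ?_⟩
    have heB' : e ∉ B \ {b} := fun h => he.2 h.1
    obtain ⟨C', hC', heC', hC's⟩ :=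
      exists_circuit_of_mem_closure (hB.indep.subset diff_subset) hecl heB'
    have : C' = fundC M B e :=
      circuit_insert_base_unique hB hC' hCe
        (hC's.trans (insert_subset_insert diff_subset)) hCes heC' heCe
    rw [this] at hC's
    rcases hC's hbC with h | h
    · exact he.2 (h ▸ hb)
    · exact h.2 rfl
  · intro heD
    by_contra hbC
    have hsub : fundC M B e \ {e} ⊆ B \ {b} := by
      intro w hw
      rcases hCes hw.1 with h | h
      · exact absurd h hw.2
      · exact ⟨h, by rintro rfl; exact hbC hw.1⟩
    exact heD.2 (M.closure_subset_closure hsub (hCe.mem_closure_diff_s8 heCe))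

end StmtAux

namespace StmtAux

section Konig

variable (A : α → α → Prop)

def reachN : ℕ → α → α → Prop
  | 0, x, y => x = y
  | n+1, x, y => ∃ z, reachN n x z ∧ A z y

def Reach (x y : α) : Prop := ∃ n, reachN A n x y

noncomputable def gdist (x y : α) : ℕ := sInf {n | reachN A n x y}

variable {A}

lemma reachN_zero {x y : α} : reachN A 0 x y ↔ x = y := Iff.rfl

lemma reachN_succ {n : ℕ} {x y : α} : reachN A (n+1) x y ↔ ∃ z, reachN A n x z ∧ A z y := Iff.rfl

lemma reach_refl (x : α) : Reach A x x := ⟨0, rfl⟩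

lemma reachN_front {n : ℕ} {x y : α} :
    reachN A (n+1) x y ↔ ∃ z, A x z ∧ reachN A n z y := by
  induction n generalizing y with
  | zero =>
    constructor
    · rintro ⟨z, rfl, h⟩; exact ⟨y, h, rfl⟩
    · rintro ⟨z, h, rfl⟩; exact ⟨x, rfl, h⟩
  | succ n ih =>
    constructor
    · rintro ⟨z, hz, hzy⟩
      obtain ⟨u, hu, huz⟩ := ih.1 hz
      exact ⟨u, hu, z, huz, hzy⟩
    · rintro ⟨z, hxz, u, huz, huy⟩
      exact ⟨u, ih.2 ⟨z, hxz, huz⟩, huy⟩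

lemma reachN_trans {m n : ℕ} {x y z : α} (h1 : reachN A m x y) (h2 : reachN A n y z) :
    reachN A (m + n) x z := by
  induction n generalizing z with
  | zero => rw [reachN_zero] at h2; exact h2 ▸ h1
  | succ n ih =>
    obtain ⟨w, hw, hwz⟩ := h2
    exact ⟨w, ih hw, hwz⟩

lemma Reach.trans {x y z : α} (h1 : Reach A x y) (h2 : Reach A y z) : Reach A x z := by
  obtain ⟨m, hm⟩ := h1; obtain ⟨n, hn⟩ := h2; exact ⟨m + n, reachN_trans hm hn⟩

lemma reachN_symm (hsym : Symmetric A) {n : ℕ} {x y : α} (h : reachN A n x y) :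
    reachN A n y x := by
  induction n generalizing y with
  | zero => exact h.symm
  | succ n ih =>
    obtain ⟨z, hz, hzy⟩ := h
    exact reachN_front.2 ⟨z, hsym hzy, ih hz⟩

lemma Reach.symm (hsym : Symmetric A) {x y : α} (h : Reach A x y) : Reach A y x := by
  obtain ⟨n, hn⟩ := h; exact ⟨n, reachN_symm hsym hn⟩

lemma Reach.reachN_gdist {x y : α} (h : Reach A x y) : reachN A (gdist A x y) x y :=
  Nat.sInf_mem h

lemma gdist_le {n : ℕ} {x y : α} (h : reachN A n x y) : gdist A x y ≤ n :=
  Nat.sInf_le h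

lemma gdist_self (x : α) : gdist A x x = 0 :=
  Nat.le_zero.1 (gdist_le (reachN_zero.2 rfl))

lemma gdist_adj_le {x z y : α} (hz : Reach A x z) (h : A z y) :
    gdist A x y ≤ gdist A x z + 1 :=
  gdist_le ⟨z, hz.reachN_gdist, h⟩

lemma exists_back_step {x y : α} {n : ℕ} (hy : Reach A x y) (hn : gdist A x y = n + 1) :
    ∃ z, Reach A x z ∧ A z y ∧ gdist A x z = n := by
  have h1 : reachN A (n+1) x y := hn ▸ hy.reachN_gdist
  obtain ⟨z, hz, hzy⟩ := h1
  have hRz : Reach A x z := ⟨n, hz⟩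
  have h2 : gdist A x z ≤ n := gdist_le hz
  have h3 : gdist A x y ≤ gdist A x z + 1 := gdist_adj_le hRz hzy
  have h4 : n ≤ gdist A x z := by omega
  exact ⟨z, hRz, hzy, le_antisymm h2 h4⟩

variable (A) in
def upN (x : α) : ℕ → α → α → Prop
  | 0, v, w => v = w
  | n+1, v, w => ∃ z, upN x n v z ∧ A z w ∧ Reach A x w ∧ gdist A x w = gdist A x z + 1

variable (A) in
def Up (x v : α) : Set α := {w | ∃ n, upN A x n v w}

lemma up_full {x y : α} (hy : Reach A x y) : y ∈ Up A x x := by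
  suffices h : ∀ n y, Reach A x y → gdist A x y = n → upN A x n x y by
    exact ⟨gdist A x y, h _ y hy rfl⟩
  intro n
  induction n with
  | zero =>
    intro y hy hg
    have := hy.reachN_gdist
    rw [hg] at this
    exact this
  | succ n ih =>
    intro y hy hg
    obtain ⟨z, hRz, hzy, hgz⟩ := exists_back_step hy hg
    exact ⟨z, ih z hRz hgz, hzy, hy, by rw [hg, hgz]⟩

lemma upN_front {x v w : α} {n : ℕ} :
    upN A x (n+1) v w ↔
      ∃ u, (A v u ∧ Reach A x u ∧ gdist A x u = gdist A x v + 1) ∧ upN A x n u w := by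
  induction n generalizing w with
  | zero =>
    constructor
    · rintro ⟨z, rfl, h1, h2, h3⟩; exact ⟨w, ⟨h1, h2, h3⟩, rfl⟩
    · rintro ⟨u, ⟨h1, h2, h3⟩, rfl⟩; exact ⟨v, rfl, h1, h2, h3⟩
  | succ n ih =>
    constructor
    · rintro ⟨z, hz, h1, h2, h3⟩
      obtain ⟨u, hu, huz⟩ := ih.1 hz
      exact ⟨u, hu, z, huz, h1, h2, h3⟩
    · rintro ⟨u, hu, z, huz, h1, h2, h3⟩
      exact ⟨z, ih.2 ⟨u, hu, huz⟩, h1, h2, h3⟩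

lemma konig_step (hloc : ∀ v, {w | A v w}.Finite) {x v : α} (hv : Reach A x v)
    (hinf : (Up A x v).Infinite) :
    ∃ u, A v u ∧ Reach A x u ∧ gdist A x u = gdist A x v + 1 ∧ (Up A x u).Infinite := by
  by_contra hcon
  push_neg at hcon
  set ch : Set α := {u | A v u ∧ Reach A x u ∧ gdist A x u = gdist A x v + 1} with hch
  have hchfin : ch.Finite := (hloc v).subset (fun u hu => hu.1)
  have hcover : Up A x v ⊆ {v} ∪ ⋃ u ∈ ch, Up A x u := by
    rintro w ⟨n, hn⟩
    match n, hn with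
    | 0, hn => exact Or.inl hn.symm
    | (n+1), hn =>
      obtain ⟨u, hu, hun⟩ := upN_front.1 hn
      exact Or.inr (mem_biUnion hu ⟨n, hun⟩)
  have hfin : ({v} ∪ ⋃ u ∈ ch, Up A x u).Finite := by
    refine (finite_singleton v).union (hchfin.biUnion fun u hu => ?_)
    rw [← not_infinite]
    exact fun h => h (hcon u hu.1 hu.2.1 hu.2.2)
  exact hinf (hfin.subset hcover)

lemma exists_ray (hloc : ∀ v, {w | A v w}.Finite) {x : α}
    (hinf : {y | Reach A x y}.Infinite) :
    ∃ v : ℕ → α, v 0 = x ∧ (∀ n, A (v n) (v (n+1))) ∧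
      (∀ n, Reach A x (v n) ∧ gdist A x (v n) = n) := by
  have hUx : (Up A x x).Infinite := hinf.mono (fun y hy => up_full hy)
  have next : ∀ t : {p : α // Reach A x p ∧ (Up A x p).Infinite},
      ∃ u : {p : α // Reach A x p ∧ (Up A x p).Infinite},
        A t.1 u.1 ∧ gdist A x u.1 = gdist A x t.1 + 1 := by
    intro t
    obtain ⟨u, h1, h2, h3, h4⟩ := konig_step hloc t.2.1 t.2.2
    exact ⟨⟨u, h2, h4⟩, h1, h3⟩
  choose nxt hnxt1 hnxt2 using next
  set f : ℕ → {p : α // Reach A x p ∧ (Up A x p).Infinite} :=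
    fun n => Nat.rec ⟨x, reach_refl x, hUx⟩ (fun _ t => nxt t) n with hf
  have hdist : ∀ n, gdist A x (f n).1 = n := by
    intro n
    induction n with
    | zero => exact gdist_self x
    | succ n ih => rw [show f (n+1) = nxt (f n) from rfl, hnxt2, ih]
  exact ⟨fun n => (f n).1, rfl, fun n => hnxt1 (f n), fun n => ⟨(f n).2.1, hdist n⟩⟩

end Konig

variable {M : Matroid α} {C C' C₁ C₂ D I J B X Z : Set α} {e f x y z b : α}

/-- the fundamental-circuit adjacency graph on the ground set. -/
def MAdj (M : Matroid α) (B : Set α) (x y : α) : Prop :=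
  (x ∈ B ∧ y ∈ M.E \ B ∧ x ∈ fundC M B y) ∨ (y ∈ B ∧ x ∈ M.E \ B ∧ y ∈ fundC M B x)

lemma madj_symm : Symmetric (MAdj M B) := fun _ _ h => h.elim Or.inr Or.inl

lemma madj_locally_finite (hB : M.IsBase B)
    (hfinC : ∀ C, Circuit M C → C.Finite) (hfinD : ∀ D, Circuit M✶ D → D.Finite) (v : α) :
    {w | MAdj M B v w}.Finite := by
  by_cases hvB : v ∈ B
  · have hsub : {w | MAdj M B v w} ⊆ fundD M B v := by
      rintro w (⟨hv, hw, hvC⟩ | ⟨hw, hv', _⟩)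
      · exact (mem_fundC_iff hB hw hv).1 hvC
      · exact absurd hvB hv'.2
    exact (hfinD _ (fundD_cocircuit hB hvB)).subset hsub
  · by_cases hvE : v ∈ M.E
    · have hsub : {w | MAdj M B v w} ⊆ fundC M B v := by
        rintro w (⟨hv, _, _⟩ | ⟨_, _, hwC⟩)
        · exact absurd hv hvB
        · exact hwC
      exact (hfinC _ (fundC_spec hB ⟨hvE, hvB⟩).1).subset hsub
    · have hsub : {w | MAdj M B v w} ⊆ (∅ : Set α) := by
        rintro w (⟨hv, _, _⟩ | ⟨_, hv', _⟩)
        · exact absurd (hB.subset_ground hv) hvE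
        · exact absurd hv'.1 hvE
      exact Set.Finite.subset (finite_empty) hsub

/-- Lemma A : all elements of a circuit are in the same component of the
fundamental graph. -/
lemma circuit_reach (hB : M.IsBase B) (hfinC : ∀ C, Circuit M C → C.Finite)
    (hC : Circuit M C) (hy : y ∈ C) (hz : z ∈ C) :
    Reach (MAdj M B) y z := by
  suffices haux : ∀ n (C : Set α), Circuit M C → (C \ B).ncard ≤ n →
      ∀ y ∈ C, ∀ z ∈ C, Reach (MAdj M B) y z by
    exact haux ((C \ B).ncard) C hC le_rfl y hy z hz
  intro n
  induction n with
  | zero =>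
    intro C hC hn y hy z hz
    exfalso
    have hCB : ¬ C ⊆ B := fun h => (hB.indep.subset h).not_dep hC.dep
    obtain ⟨e, heC, heB⟩ := not_subset.1 hCB
    have hpos : 0 < (C \ B).ncard :=
      (Set.ncard_pos ((hfinC _ hC).sdiff)).2 ⟨e, heC, heB⟩
    omega
  | succ n ih =>
    intro C hC hn y hy z hz
    have hCB : ¬ C ⊆ B := fun h => (hB.indep.subset h).not_dep hC.dep
    obtain ⟨e, heC, heB⟩ := not_subset.1 hCB
    have heE : e ∈ M.E \ B := ⟨hC.subset_ground heC, heB⟩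
    obtain ⟨hCe, heCe, hCes⟩ := fundC_spec hB heE
    have hreachCe : ∀ w ∈ fundC M B e, Reach (MAdj M B) w e := by
      intro w hw
      by_cases hwe : w = e
      · rw [hwe]; exact reach_refl e
      · have hwB : w ∈ B := by
          rcases hCes hw with h | h
          · exact absurd h hwe
          · exact h
        exact ⟨1, w, rfl, Or.inl ⟨hwB, heE, hw⟩⟩
    have hkey : ∀ f ∈ C, Reach (MAdj M B) f e := by
      intro f hf
      by_cases hfe : f = e
      · rw [hfe]; exact reach_refl e
      by_cases hfCe : f ∈ fundC M B e
      · exact hreachCe f hfCe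
      by_cases hCeq : C = fundC M B e
      · exact absurd (hCeq ▸ hf) hfCe
      obtain ⟨C', hC', hfC', hC's⟩ :=
        exists_circuit_elim hC hCe ⟨heC, heCe⟩ ⟨hf, hfCe⟩
      have hC'ncard : (C' \ B).ncard ≤ n := by
        have hsub : C' \ B ⊆ (C \ B) \ {e} := by
          rintro w ⟨hw1, hw2⟩
          obtain ⟨hw3, hw4⟩ := hC's hw1
          rcases hw3 with h | h
          · exact ⟨⟨h, hw2⟩, hw4⟩
          · rcases hCes h with h' | h'
            · exact absurd h' hw4
            · exact absurd h' hw2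
        have h1 : (C' \ B).ncard ≤ ((C \ B) \ {e}).ncard :=
          Set.ncard_le_ncard hsub (((hfinC _ hC).sdiff).sdiff)
        have h2 : ((C \ B) \ {e}).ncard < (C \ B).ncard :=
          Set.ncard_diff_singleton_lt_of_mem ⟨heC, heB⟩ ((hfinC _ hC).sdiff)
        omega
      have hC'Ce : (C' ∩ fundC M B e).Nonempty := by
        by_contra hcon
        rw [not_nonempty_iff_eq_empty] at hcon
        have hC'C : C' ⊆ C := by
          intro w hw
          obtain ⟨hw1, hw2⟩ := hC's hw
          rcases hw1 with h | h
          · exact h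
          · exact absurd (mem_inter hw h) (by rw [hcon]; exact fun h => h)
        have hC'ssub : C' ⊂ C :=
          hC'C.ssubset_of_ne (by rintro rfl; exact (hC's heC).2 rfl)
        exact hC.2 C' hC'ssub hC'.dep
      obtain ⟨y₀, hy₀C', hy₀Ce⟩ := hC'Ce
      exact (ih C' hC' hC'ncard f hfC' y₀ hy₀C').trans (hreachCe y₀ hy₀Ce)
    exact (hkey y hy).trans ((hkey z hz).symm madj_symm)

/-- the key finiteness lemma : components of the fundamental graph are finite. -/
lemma reach_class_finite (hB : M.IsBase B) (hfinC : ∀ C, Circuit M C → C.Finite)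
    (hfinD : ∀ D, Circuit M✶ D → D.Finite) (hx : x ∈ M.E) :
    {y | Reach (MAdj M B) x y}.Finite := by
  classical
  rw [← not_infinite]
  intro hinf
  obtain ⟨v, hv0, hvadj, hvd⟩ := exists_ray (madj_locally_finite hB hfinC hfinD) hinf
  -- all vertices are in the ground set
  have hvE : ∀ n, v n ∈ M.E := by
    intro n
    cases n with
    | zero => exact hv0 ▸ hx
    | succ n =>
      rcases hvadj n with ⟨_, h2, _⟩ | ⟨h1, _, _⟩
      · exact h2.1
      · exact hB.subset_ground h1
  -- injectivity
  have hinj : Function.Injective v := by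
    intro m n h
    have hm := (hvd m).2
    have hn := (hvd n).2
    rw [h] at hm
    rw [hm] at hn
    exact hn
  -- parity of sides
  have hside : ∀ n, (v n ∈ B) ↔ ((v 0 ∈ B) ↔ Even n) := by
    intro n
    induction n with
    | zero => simp
    | succ n ih =>
      have hflip : (v (n+1) ∈ B) ↔ ¬ (v n ∈ B) := by
        rcases hvadj n with ⟨h1, h2, _⟩ | ⟨h1, h2, _⟩
        · exact iff_of_false h2.2 (fun h => h h1)
        · exact iff_of_true h1 h2.2
      rw [hflip, ih, Nat.even_add_one]
      tauto
  set s : ℕ := if v 0 ∈ B then 0 else 1 with hs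
  have hβB : ∀ i, v (2*i+s) ∈ B := by
    intro i
    by_cases h0 : v 0 ∈ B
    · have hs0 : s = 0 := by rw [hs, if_pos h0]
      exact (hside (2*i+s)).2 (iff_of_true h0 ⟨i, by omega⟩)
    · have hs1 : s = 1 := by rw [hs, if_neg h0]
      refine (hside (2*i+s)).2 (iff_of_false h0 ?_)
      rw [hs1]
      rintro ⟨r, hr⟩
      omega
  have hεnB : ∀ j, v (2*j+1+s) ∉ B := by
    intro j hmem
    by_cases h0 : v 0 ∈ B
    · have hs0 : s = 0 := by rw [hs, if_pos h0]
      have := (hside (2*j+1+s)).1 hmem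
      rw [hs0] at this
      obtain ⟨r, hr⟩ := this.1 h0
      omega
    · have hs1 : s = 1 := by rw [hs, if_neg h0]
      have := (hside (2*j+1+s)).1 hmem
      exact h0 (this.2 ⟨j+1, by omega⟩)
  have hεE : ∀ j, v (2*j+1+s) ∈ M.E \ B := fun j => ⟨hvE _, hεnB j⟩
  -- ray edges
  have hadj1 : ∀ j, v (2*j+s) ∈ fundC M B (v (2*j+1+s)) := by
    intro j
    rcases hvadj (2*j+s) with ⟨_, _, h3⟩ | ⟨h1, _, _⟩
    · rw [show 2*j+s+1 = 2*j+1+s by omega] at h3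
      exact h3
    · rw [show 2*j+s+1 = 2*j+1+s by omega] at h1
      exact absurd h1 (hεnB j)
  have hadj2 : ∀ j, v (2*(j+1)+s) ∈ fundC M B (v (2*j+1+s)) := by
    intro j
    rcases hvadj (2*j+1+s) with ⟨h1, _, _⟩ | ⟨_, _, h3⟩
    · exact absurd h1 (hεnB j)
    · rw [show 2*j+1+s+1 = 2*(j+1)+s by omega] at h3
      exact h3
  -- levels: a β-vertex in the fundamental circuit of an ε-vertex is adjacent on the ray
  have hlevel : ∀ i j, v (2*i+s) ∈ fundC M B (v (2*j+1+s)) → i = j ∨ i = j + 1 := by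
    intro i j h
    have hadj : MAdj M B (v (2*j+1+s)) (v (2*i+s)) := Or.inr ⟨hβB i, hεE j, h⟩
    have h1 : gdist (MAdj M B) x (v (2*i+s)) ≤ gdist (MAdj M B) x (v (2*j+1+s)) + 1 :=
      gdist_adj_le (hvd _).1 hadj
    have h2 : gdist (MAdj M B) x (v (2*j+1+s)) ≤ gdist (MAdj M B) x (v (2*i+s)) + 1 :=
      gdist_adj_le (hvd _).1 (madj_symm hadj)
    rw [(hvd _).2, (hvd _).2] at h1 h2
    omega
  -- the exchanged set Z
  set R : Set α := range (fun i => v (2*i+s)) with hR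
  set Z : Set α := (B \ R) ∪ range (fun j => v (2*j+1+s)) with hZdef
  have hZE : Z ⊆ M.E :=
    union_subset (diff_subset.trans hB.subset_ground) (range_subset_iff.2 fun j => hvE _)
  have hβ0R : v (2*0+s) ∈ R := ⟨0, rfl⟩
  have hβ0Z : v (2*0+s) ∉ Z := by
    rintro (⟨_, hr⟩ | ⟨j, hj⟩)
    · exact hr hβ0R
    · have hj2 : v (2*j+1+s) = v (2*0+s) := hj
      exact hεnB j (by rw [hj2]; exact hβB 0)
  -- Claim A : v (2*0+s) is not spanned by Z
  have hclA : v (2*0+s) ∉ M.closure Z := by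
    intro hmem
    obtain ⟨J, hJ⟩ := M.exists_isBasis Z hZE
    have hvsJ : v (2*0+s) ∉ J := fun h => hβ0Z (hJ.subset h)
    have hmemJ : v (2*0+s) ∈ M.closure J := by
      rw [hJ.closure_eq_closure]; exact hmem
    obtain ⟨C, hC, hvsC, hCsub⟩ := exists_circuit_of_mem_closure hJ.indep hmemJ hvsJ
    have hCsub' : C ⊆ insert (v (2*0+s)) Z := hCsub.trans (insert_subset_insert hJ.subset)
    have hstep : ∀ j, v (2*j+1+s) ∈ C := by
      intro j
      induction j with
      | zero =>
        obtain ⟨w, ⟨hwC, hwD⟩, hwne⟩ :=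
          circuit_cocircuit_second hC (fundD_cocircuit hB (hβB 0))
            ⟨hvsC, mem_fundD_self hB (hβB 0)⟩
        rcases hCsub' hwC with rfl | hwZ
        · exact absurd rfl hwne
        rcases hwZ with ⟨hwB, hwR⟩ | ⟨j', hj'⟩
        · refine absurd ?_ hwR
          rw [fundD_inter_ground hB (hβB 0) hwD hwB]
          exact hβ0R
        · have hj2 : v (2*j'+1+s) = w := hj'
          subst hj2
          have hlev := (mem_fundC_iff hB (hεE j') (hβB 0)).2 hwD
          rcases hlevel 0 j' hlev with h | h
          · rw [← h] at hwC
            exact hwC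
          · omega
      | succ j ih =>
        have hεjD : v (2*j+1+s) ∈ fundD M B (v (2*(j+1)+s)) :=
          (mem_fundC_iff hB (hεE j) (hβB (j+1))).1 (hadj2 j)
        obtain ⟨w, ⟨hwC, hwD⟩, hwne⟩ :=
          circuit_cocircuit_second hC (fundD_cocircuit hB (hβB (j+1))) ⟨ih, hεjD⟩
        rcases hCsub' hwC with rfl | hwZ
        · have h1 := fundD_inter_ground hB (hβB (j+1)) hwD (hβB 0)
          have h2 := hinj h1
          omega
        rcases hwZ with ⟨hwB, hwR⟩ | ⟨j', hj'⟩
        · refine absurd ?_ hwR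
          rw [fundD_inter_ground hB (hβB (j+1)) hwD hwB]
          exact ⟨j+1, rfl⟩
        · have hj2 : v (2*j'+1+s) = w := hj'
          subst hj2
          have hlev := (mem_fundC_iff hB (hεE j') (hβB (j+1))).2 hwD
          rcases hlevel (j+1) j' hlev with h | h
          · rw [← h] at hwC
            exact hwC
          · have hj'j : j' = j := by omega
            subst hj'j
            exact absurd rfl hwne
    have hrange : range (fun j => v (2*j+1+s)) ⊆ C := range_subset_iff.2 hstep
    have hrinf : (range (fun j => v (2*j+1+s))).Infinite :=
      infinite_range_of_injective (fun a b h => by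
        have := hinj h
        omega)
    exact hrinf ((hfinC _ hC).subset hrange)
  -- Claim B : build a finite cocircuit avoiding Z and containing v (2*0+s)
  obtain ⟨J, hJ⟩ := M.exists_isBasis Z hZE
  have hvsJ : v (2*0+s) ∉ J := fun h => hβ0Z (hJ.subset h)
  have hclAJ : v (2*0+s) ∉ M.closure J := by
    rw [hJ.closure_eq_closure]; exact hclA
  have hins : M.Indep (insert (v (2*0+s)) J) :=
    (hJ.indep.insert_indep_iff_of_notMem hvsJ).2 ⟨hvE _, hclAJ⟩
  obtain ⟨B', hB', hB's⟩ := hins.exists_isBase_superset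
  have hvsB' : v (2*0+s) ∈ B' := hB's (mem_insert _ _)
  set D₀ : Set α := fundD M B' (v (2*0+s)) with hD₀def
  have hD₀cc : Circuit M✶ D₀ := fundD_cocircuit hB' hvsB'
  have hD₀fin : D₀.Finite := hfinD _ hD₀cc
  have hJB' : J ⊆ B' \ {v (2*0+s)} := fun w hw =>
    ⟨hB's (mem_insert_of_mem _ hw), fun h => hvsJ (h ▸ hw)⟩
  have hZD₀ : ∀ w ∈ Z, w ∉ D₀ := by
    intro w hw hwD
    have h1 : w ∈ M.closure J := by
      rw [hJ.closure_eq_closure]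
      exact M.subset_closure Z hZE hw
    exact hwD.2 (M.closure_subset_closure hJB' h1)
  have hvsD₀ : v (2*0+s) ∈ D₀ := mem_fundD_self hB' hvsB'
  -- the set of β-indices hitting D₀
  set G : Set ℕ := (fun i => v (2*i+s)) ⁻¹' D₀ with hGdef
  have hGfin : G.Finite := by
    refine Set.Finite.preimage ?_ hD₀fin
    intro a _ b _ h
    have := hinj h
    omega
  have hG0 : 0 ∈ G := hvsD₀
  obtain ⟨m, hmG, hmax⟩ := Set.Finite.exists_maximalFor id G hGfin ⟨0, hG0⟩
  have hβmD : v (2*m+s) ∈ D₀ := hmG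
  obtain ⟨w, ⟨hwC, hwD⟩, hwne⟩ :=
    circuit_cocircuit_second (fundC_spec hB (hεE m)).1 hD₀cc ⟨hadj1 m, hβmD⟩
  rcases (fundC_spec hB (hεE m)).2.2 hwC with rfl | hwB
  · exact hZD₀ _ (Or.inr ⟨m, rfl⟩) hwD
  · by_cases hwR : w ∈ R
    · obtain ⟨i, hi⟩ := hwR
      have hi2 : v (2*i+s) = w := hi
      subst hi2
      rcases hlevel i m hwC with h | h
      · exact hwne (by rw [h])
      · rw [h] at hwD
        have hmem1 : m + 1 ∈ G := hwD
        have heq := hmax (j := m+1) hmem1 (Nat.le_succ m)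
        simp only [id] at heq
        omega
    · exact hZD₀ w (Or.inl ⟨hwB, hwR⟩) hwD

lemma circuit_nonempty (h : Circuit M C) : C.Nonempty := by
  rcases C.eq_empty_or_nonempty with rfl | h'
  · exact absurd M.empty_indep h.dep.not_indep
  · exact h'

/-- The forward direction: finitary and cofinitary implies direct sum of finite matroids. -/
lemma forward (hfinC : ∀ C, Circuit M C → C.Finite) (hfinD : ∀ D, Circuit M✶ D → D.Finite) :
    ∃ P : Set (Set α), P.PairwiseDisjoint id ∧ ⋃₀ P = M.E ∧ (∀ p ∈ P, p.Finite) ∧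
      ∀ I ⊆ M.E, (M.Indep I ↔ ∀ p ∈ P, (M ↾ p).Indep (I ∩ p)) := by
  obtain ⟨B, hB⟩ := M.exists_isBase
  set cls : α → Set α := fun a => {y | Reach (MAdj M B) a y} with hcls
  have hadjE : ∀ u w, MAdj M B u w → w ∈ M.E := by
    rintro u w (⟨_, h2, _⟩ | ⟨h1, _, _⟩)
    · exact h2.1
    · exact hB.subset_ground h1
  have hreachE : ∀ a y, a ∈ M.E → Reach (MAdj M B) a y → y ∈ M.E := by
    rintro a y ha ⟨n, hn⟩
    cases n with
    | zero => exact hn ▸ ha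
    | succ n =>
      obtain ⟨z, _, hz⟩ := hn
      exact hadjE z y hz
  have hclseq : ∀ a b, Reach (MAdj M B) a b → cls a = cls b := by
    intro a b hab
    ext u
    simp only [hcls, mem_setOf_eq]
    exact ⟨fun h => (hab.symm madj_symm).trans h, fun h => hab.trans h⟩
  refine ⟨cls '' M.E, ?_, ?_, ?_, ?_⟩
  · rintro p ⟨a, haE, rfl⟩ q ⟨b, hbE, rfl⟩ hne
    refine Set.disjoint_left.2 fun w hwa hwb => hne ?_
    exact hclseq a b ((show Reach (MAdj M B) a w from hwa).trans
      ((show Reach (MAdj M B) b w from hwb).symm madj_symm))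
  · apply subset_antisymm
    · rintro w ⟨p, ⟨a, haE, rfl⟩, hw⟩
      exact hreachE a w haE hw
    · intro a haE
      exact ⟨cls a, ⟨a, haE, rfl⟩, reach_refl a⟩
  · rintro p ⟨a, haE, rfl⟩
    exact reach_class_finite hB hfinC hfinD haE
  · intro I hIE
    constructor
    · rintro hI p ⟨a, haE, rfl⟩
      rw [restrict_indep_iff]
      exact ⟨hI.subset inter_subset_left, inter_subset_right⟩
    · intro h
      by_contra hni
      have hdep : M.Dep I := (not_indep_iff hIE).1 hni
      obtain ⟨C, hC, hCI⟩ := exists_circuit_subset_of_dep hdep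
      obtain ⟨c, hc⟩ := circuit_nonempty hC
      have hcE : c ∈ M.E := hC.subset_ground hc
      have hCcls : C ⊆ cls c := fun w hw => circuit_reach hB hfinC hC hc hw
      have h1 := h (cls c) ⟨c, hcE, rfl⟩
      rw [restrict_indep_iff] at h1
      exact (h1.1.subset (subset_inter hCI hCcls)).not_dep hC.dep

/-- The backward direction. -/
lemma backward {P : Set (Set α)} (hdisj : P.PairwiseDisjoint id) (hU : ⋃₀ P = M.E)
    (hfin : ∀ p ∈ P, p.Finite)
    (hIff : ∀ I ⊆ M.E, (M.Indep I ↔ ∀ p ∈ P, (M ↾ p).Indep (I ∩ p))) :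
    (∀ C, Circuit M C → C.Finite) ∧ (∀ D, Circuit M✶ D → D.Finite) := by
  -- circuits lie inside single parts
  have hcircuit_part : ∀ C, Circuit M C → ∃ p ∈ P, C ⊆ p := by
    intro C hC
    have h1 : ¬ ∀ p ∈ P, (M ↾ p).Indep (C ∩ p) := by
      intro h
      exact ((hIff C hC.subset_ground).2 h).not_dep hC.dep
    push_neg at h1
    obtain ⟨p, hp, hnp⟩ := h1
    refine ⟨p, hp, ?_⟩
    by_contra hCp
    have hss : C ∩ p ⊂ C :=
      ssubset_of_ne_of_subset (fun h => hCp (h ▸ inter_subset_right)) inter_subset_left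
    have hind : M.Indep (C ∩ p) := by
      rw [← not_dep_iff ((inter_subset_left).trans hC.subset_ground)]
      exact hC.2 _ hss
    rw [restrict_indep_iff] at hnp
    exact hnp ⟨hind, inter_subset_right⟩
  have hfinC : ∀ C, Circuit M C → C.Finite := by
    intro C hC
    obtain ⟨p, hp, hCp⟩ := hcircuit_part C hC
    exact (hfin p hp).subset hCp
  refine ⟨hfinC, ?_⟩
  -- the dual decomposes over the same partition
  have hdual : ∀ I, I ⊆ M.E → (∀ p ∈ P, M✶.Indep (I ∩ p)) → M✶.Indep I := by
    intro I hIE h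
    have hbase : ∀ p ∈ P, ∃ Bp, M.IsBase Bp ∧ Disjoint (I ∩ p) Bp := fun p hp =>
      (dual_indep_iff_exists ((inter_subset_left).trans hIE)).1 (h p hp)
    choose! Bp hBp hBdisj using hbase
    set Bhat : Set α := ⋃ p ∈ P, (Bp p ∩ p) with hBhat
    have hBhatE : Bhat ⊆ M.E := by
      refine iUnion₂_subset fun p hp => ?_
      exact (inter_subset_left).trans (hBp p hp).subset_ground
    have hBhatq : ∀ q ∈ P, Bhat ∩ q = Bp q ∩ q := by
      intro q hq
      apply subset_antisymm
      · rintro w ⟨hw1, hw2⟩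
        obtain ⟨p, hp, hwp⟩ := mem_iUnion₂.1 hw1
        by_cases hpq : p = q
        · subst hpq; exact ⟨hwp.1, hw2⟩
        · exact (Set.disjoint_left.1 (hdisj hp hq hpq) hwp.2 hw2).elim
      · intro w hw
        exact ⟨mem_iUnion₂.2 ⟨q, hq, hw⟩, hw.2⟩
    have hBhatI : M.Indep Bhat := by
      rw [hIff Bhat hBhatE]
      intro q hq
      rw [restrict_indep_iff, hBhatq q hq]
      exact ⟨(hBp q hq).indep.subset inter_subset_left, inter_subset_right⟩
    have hBhatsp : M.E ⊆ M.closure Bhat := by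
      intro w hwE
      rw [← hU] at hwE
      obtain ⟨p, hp, hwp⟩ := hwE
      by_cases hwB : w ∈ Bp p
      · exact M.subset_closure Bhat hBhatE (mem_iUnion₂.2 ⟨p, hp, hwB, hwp⟩)
      · have hdep : M.Dep (insert w (Bp p)) :=
          (hBp p hp).insert_dep ⟨(hU ▸ mem_sUnion.2 ⟨p, hp, hwp⟩ : w ∈ M.E), hwB⟩
        obtain ⟨C, hC, hCsub⟩ := exists_circuit_subset_of_dep hdep
        have hwC : w ∈ C := by
          by_contra hwC
          have : C ⊆ Bp p := fun u hu => ((hCsub hu).resolve_left (fun h => hwC (h ▸ hu)))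
          exact ((hBp p hp).indep.subset this).not_dep hC.dep
        obtain ⟨q, hq, hCq⟩ := hcircuit_part C hC
        have hpq : q = p := by
          by_contra hpq
          exact Set.disjoint_left.1 (hdisj hq hp hpq) (hCq hwC) hwp
        subst hpq
        have hsub : C \ {w} ⊆ Bp q ∩ q := by
          rintro u ⟨hu1, hu2⟩
          refine ⟨(hCsub hu1).resolve_left hu2, hCq hu1⟩
        exact M.closure_subset_closure
          (hsub.trans (fun u hu => mem_iUnion₂.2 ⟨q, hq, hu⟩))
          (hC.mem_closure_diff_s8 hwC)
    have hBhatbase : M.IsBase Bhat := hBhatI.isBase_of_ground_subset_closure hBhatsp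
    rw [dual_indep_iff_exists hIE]
    refine ⟨Bhat, hBhatbase, Set.disjoint_left.2 fun w hwI hwB => ?_⟩
    obtain ⟨p, hp, hwp⟩ := mem_iUnion₂.1 hwB
    exact Set.disjoint_left.1 (hBdisj p hp) ⟨hwI, hwp.2⟩ hwp.1
  -- now conclude for cocircuits
  intro D hD
  have hDE : D ⊆ M.E := by
    have := hD.subset_ground
    rwa [dual_ground] at this
  have h1 : ¬ ∀ p ∈ P, M✶.Indep (D ∩ p) := fun h => (hdual D hDE h).not_dep hD.dep
  push_neg at h1
  obtain ⟨p, hp, hnp⟩ := h1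
  by_cases hDp : D ⊆ p
  · exact (hfin p hp).subset hDp
  exfalso
  have hss : D ∩ p ⊂ D :=
    ssubset_of_ne_of_subset (fun h => hDp (h ▸ inter_subset_right)) inter_subset_left
  have hsub : D ∩ p ⊆ M✶.E := by rw [dual_ground]; exact (inter_subset_left).trans hDE
  exact hnp ((not_dep_iff hsub).1 (hD.2 _ hss))

end StmtAux

theorem stmt8 (M : Matroid α) :
    ((∀ C, Circuit M C → C.Finite) ∧ (∀ D, Circuit M✶ D → D.Finite)) ↔
      ∃ P : Set (Set α), P.PairwiseDisjoint id ∧ ⋃₀ P = M.E ∧ (∀ p ∈ P, p.Finite) ∧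
        ∀ I ⊆ M.E, (M.Indep I ↔ ∀ p ∈ P, (M ↾ p).Indep (I ∩ p)) := by
  constructor
  · rintro ⟨h1, h2⟩
    exact StmtAux.forward h1 h2
  · rintro ⟨P, h1, h2, h3, h4⟩
    exact StmtAux.backward h1 h2 h3 h4
end

section
/- Let (X,Y) be a partition of the ground set of a matroid M. For bases B_X, B_X' of M|X and B_Y, B_Y' of M|Y, define del(B_X,B_Y) as the minimum cardinality of a finite set F ⊆ B_X ∪ B_Y with (B_X ∪ B_Y) \ F independent (∞ if no finite such F exists). Then del(B_X, B_Y) = del(B_X', B_Y'). -/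
open Set Matroid

variable {α : Type*}

lemma aux_nullity_wd {M : Matroid α} {S B B' : Set α} (hB : M.IsBasis B S) (hB' : M.IsBasis B' S) :
    (S \ B).encard = (S \ B').encard := by
  have h3 := hB.isBase_restrict.compl_isBase_dual
  have h4 := hB'.isBase_restrict.compl_isBase_dual
  simp only [dual_ground, restrict_ground_eq] at h3 h4
  exact h3.encard_eq_encard_of_isBase h4

lemma aux_del_eq {M : Matroid α} {I J B : Set α} (hB : M.IsBasis B (I ∪ J)) :
    del M I J = ((I ∪ J) \ B).encard := by
  set S := I ∪ J with hS
  refine le_antisymm ?_ (le_sInf ?_)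
  · rcases (S \ B).finite_or_infinite with hfin | hinf
    · refine sInf_le ⟨S \ B, hfin, diff_subset, ?_, rfl⟩
      rw [diff_diff_cancel_left hB.subset]
      exact hB.indep
    · simp [hinf.encard_eq]
  · rintro n ⟨F, hFfin, hFS, hind, rfl⟩
    obtain ⟨B₁, hB₁, hsub⟩ := hind.subset_isBasis_of_subset diff_subset hB.subset_ground
    have hdiff : S \ B₁ ⊆ F := fun x hx => by
      by_contra hxF
      exact hx.2 (hsub ⟨hx.1, hxF⟩)
    calc (S \ B).encard = (S \ B₁).encard := aux_nullity_wd hB hB₁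
      _ ≤ F.encard := encard_le_encard hdiff

lemma aux_indep_transfer {M : Matroid α} {X BX BX' J : Set α}
    (hBX : M.IsBasis BX X) (hBX' : M.IsBasis BX' X) (hJX : Disjoint X J)
    (h : M.Indep (BX ∪ J)) : M.Indep (BX' ∪ J) := by
  have hX : X ⊆ M.E := hBX.subset_ground
  have hJE : J ⊆ M.E := subset_union_right.trans h.subset_ground
  have hB1 : M.IsBasis (BX ∪ J) (X ∪ J) := by
    refine h.isBasis_of_subset_of_subset_closure
      (union_subset (hBX.subset.trans subset_union_left) subset_union_right)
      (union_subset ?_ ?_)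
    · exact hBX.subset_closure.trans (M.closure_subset_closure subset_union_left)
    · exact subset_union_right.trans (M.subset_closure (BX ∪ J) h.subset_ground)
  obtain ⟨B₂, hB₂, hsub1, hsub2⟩ := hBX'.indep.exists_isBasis_subset_union_isBasis
      (hBX'.subset.trans subset_union_left) hB1
  have hXB2 : B₂ ∩ X = BX' :=
    (hBX'.eq_of_subset_indep (hB₂.indep.subset inter_subset_left)
      (subset_inter hsub1 hBX'.subset) inter_subset_right).symm
  set K := B₂ ∩ J with hK
  have hKind : M.Indep (BX ∪ K) := h.subset (union_subset_union_right _ inter_subset_right)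
  have hB2eq : B₂ = BX' ∪ K := by
    apply subset_antisymm
    · intro x hx
      rcases hB₂.subset hx with hxX | hxJ
      · exact Or.inl (hXB2 ▸ ⟨hx, hxX⟩)
      · exact Or.inr ⟨hx, hxJ⟩
    · exact union_subset hsub1 inter_subset_left
  have hB2cl : B₂ ⊆ M.closure (BX ∪ K) := by
    rw [hB2eq]
    refine union_subset ?_ ?_
    · exact hBX'.subset.trans (hBX.subset_closure.trans
        (M.closure_subset_closure subset_union_left))
    · exact subset_union_right.trans (M.subset_closure (BX ∪ K) hKind.subset_ground)
  have hJB2 : J ⊆ B₂ := by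
    intro x hxJ
    by_contra hxB2
    have hx1 : x ∈ M.closure B₂ := hB₂.subset_closure (Or.inr hxJ)
    have hx2 : x ∈ M.closure (BX ∪ K) :=
      M.closure_subset_closure_of_subset_closure hB2cl hx1
    have hxK : x ∉ BX ∪ K := by
      rintro (hxBX | hxK)
      · exact hJX.le_bot ⟨hBX.subset hxBX, hxJ⟩
      · exact hxB2 hxK.1
    have hins : M.Indep (insert x (BX ∪ K)) := by
      refine h.subset (insert_subset (Or.inr hxJ)
        (union_subset_union_right _ inter_subset_right))
    exact ((hKind.insert_indep_iff_of_notMem hxK).mp hins).2 hx2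
  have hfin : B₂ = BX' ∪ J := by
    rw [hB2eq]
    congr 1
    exact subset_antisymm inter_subset_right (subset_inter hJB2 Subset.rfl)
  exact hfin ▸ hB₂.indep

lemma aux_del_comm (M : Matroid α) (I J : Set α) : del M I J = del M J I := by
  rw [del, del, union_comm]

lemma aux_del_left (M : Matroid α) {X Y BX BX' BY : Set α} (hdisj : Disjoint X Y)
    (hXY : X ∪ Y = M.E)
    (hBX : (M ↾ X).IsBase BX) (hBX' : (M ↾ X).IsBase BX') (hBY : (M ↾ Y).IsBase BY) :
    del M BX BY = del M BX' BY := by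
  have hX : X ⊆ M.E := hXY ▸ subset_union_left
  have hY : Y ⊆ M.E := hXY ▸ subset_union_right
  rw [isBase_restrict_iff hX] at hBX hBX'
  rw [isBase_restrict_iff hY] at hBY
  obtain ⟨B, hB, hBXB⟩ := hBX.indep.subset_isBasis_of_subset subset_union_left
    (union_subset (hBX.subset.trans hX) (hBY.subset.trans hY))
  set K := B ∩ BY with hKdef
  have hdXY : ∀ x, x ∈ X → x ∉ BY := fun x hx hx' => hdisj.le_bot ⟨hx, hBY.subset hx'⟩
  have hBeq : B = BX ∪ K := by
    apply subset_antisymm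
    · intro x hx
      rcases hB.subset hx with hxX | hxY
      · exact Or.inl hxX
      · exact Or.inr ⟨hx, hxY⟩
    · exact union_subset hBXB inter_subset_left
  have hKY : Disjoint X K := hdisj.mono_right (inter_subset_right.trans hBY.subset)
  have hind' : M.Indep (BX' ∪ K) := aux_indep_transfer hBX hBX' hKY (hBeq ▸ hB.indep)
  have hclB : M.closure B ⊆ M.closure (BX' ∪ K) := by
    apply M.closure_subset_closure_of_subset_closure
    rw [hBeq]
    refine union_subset ?_ ?_
    · exact hBX.subset.trans (hBX'.subset_closure.trans
        (M.closure_subset_closure subset_union_left))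
    · exact subset_union_right.trans (M.subset_closure _ hind'.subset_ground)
  have hB' : M.IsBasis (BX' ∪ K) (BX' ∪ BY) := by
    refine hind'.isBasis_of_subset_of_subset_closure
      (union_subset subset_union_left (inter_subset_right.trans subset_union_right))
      (union_subset ?_ ?_)
    · exact subset_union_left.trans (M.subset_closure _ hind'.subset_ground)
    · exact (subset_union_right.trans hB.subset_closure).trans hclB
  rw [aux_del_eq hB, aux_del_eq hB']
  have e1 : (BX ∪ BY) \ B = BY \ B := by
    rw [union_diff_distrib, diff_eq_empty.mpr hBXB, empty_union]
  have e2 : (BX' ∪ BY) \ (BX' ∪ K) = BY \ B := by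
    ext x
    simp only [mem_diff, mem_union, hKdef, mem_inter_iff, not_or, not_and]
    constructor
    · rintro ⟨hx | hx, hx1, hx2⟩
      · exact absurd hx hx1
      · exact ⟨hx, fun hxB => (hx2 hxB) hx⟩
    · rintro ⟨hxBY, hxB⟩
      exact ⟨Or.inr hxBY, fun hx' => hdXY x (hBX'.subset hx') hxBY, fun hxB' _ => hxB hxB'⟩
  rw [e1, e2]

theorem stmt10 (M : Matroid α) (X Y : Set α) (hdisj : Disjoint X Y) (hXY : X ∪ Y = M.E)
    (BX BX' BY BY' : Set α)
    (hBX : (M ↾ X).IsBase BX) (hBX' : (M ↾ X).IsBase BX')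
    (hBY : (M ↾ Y).IsBase BY) (hBY' : (M ↾ Y).IsBase BY') :
    del M BX BY = del M BX' BY' := by
  calc del M BX BY = del M BX' BY := aux_del_left M hdisj hXY hBX hBX' hBY
    _ = del M BY BX' := aux_del_comm M BX' BY
    _ = del M BY' BX' := aux_del_left M hdisj.symm (by rwa [union_comm]) hBY hBY' hBX'
    _ = del M BX' BY' := aux_del_comm M BY' BX'
end

section
/- For a subset X of the ground set of a matroid M and B_X ⊆ X, the following are equivalent: (i) B_X is a basis of the contraction M.X = (M*|X)*; (ii) there exists a basis B of M \ X (the deletion of X's complement restriction, i.e., M restricted to E \ X) such that B_X ∪ B is a basis of M; (iii) for every basis B of M restricted to E \ X, B_X ∪ B is a basis of M. -/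
open Set Matroid

variable {α : Type*}

/-- Auxiliary: if `B` is a basis of `M.E \ X` and `K ∪ B` is a base, then `X \ K` is a
dual basis of `X`. -/
lemma aux_c (M : Matroid α) {X K B : Set α} (hX : X ⊆ M.E) (hK : K ⊆ X)
    (hB : M.IsBasis B (M.E \ X)) (hKB : M.IsBase (K ∪ B)) : M✶.IsBasis (X \ K) X := by
  have hBE : B ⊆ M.E \ X := hB.subset
  have h1 : (K ∪ B) ∩ (M.E \ X) = B := by
    apply subset_antisymm
    · rintro x ⟨hx1 | hx1, hx2⟩
      · exact absurd (hK hx1) hx2.2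
      · exact hx1
    · exact fun x hx => ⟨Or.inr hx, hBE hx⟩
  have h2 : M.IsBasis ((K ∪ B) ∩ (M.E \ X)) (M.E \ X) := by rw [h1]; exact hB
  have h3 := (hKB.inter_isBasis_iff_compl_inter_isBasis_dual diff_subset).mp h2
  rw [diff_diff_cancel_left hX] at h3
  have h4 : (M.E \ (K ∪ B)) ∩ X = X \ K := by
    ext x
    constructor
    · rintro ⟨⟨-, hx2⟩, hx3⟩
      exact ⟨hx3, fun hxK => hx2 (Or.inl hxK)⟩
    · rintro ⟨hx1, hx2⟩
      refine ⟨⟨hX hx1, ?_⟩, hx1⟩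
      rintro (h | h)
      · exact hx2 h
      · exact (hBE h).2 hx1
  rwa [h4] at h3

/-- Auxiliary: if `X \ BX` is a dual basis of `X`, then there is a basis `B` of `M.E \ X`
with `BX ∪ B` a base. -/
lemma aux_b (M : Matroid α) {X BX : Set α} (hX : X ⊆ M.E) (hBX : BX ⊆ X)
    (h : M✶.IsBasis (X \ BX) X) :
    ∃ B, M.IsBasis B (M.E \ X) ∧ M.IsBase (BX ∪ B) := by
  obtain ⟨Bs, hBs, hEq⟩ := h.exists_isBase
  have hBsE : Bs ⊆ M.E := hBs.subset_ground
  have h2 : M✶.IsBasis (Bs ∩ X) X := hEq ▸ h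
  have h3 := (hBs.inter_isBasis_iff_compl_inter_isBasis_dual
    (show X ⊆ M✶.E from hX)).mp h2
  simp only [dual_dual, dual_ground] at h3
  refine ⟨(M.E \ Bs) ∩ (M.E \ X), h3, ?_⟩
  have hbase : M.IsBase (M.E \ Bs) := hBs.compl_isBase_of_dual
  have heq : M.E \ Bs = BX ∪ (M.E \ Bs) ∩ (M.E \ X) := by
    ext x
    constructor
    · rintro ⟨hxE, hxBs⟩
      by_cases hxX : x ∈ X
      · left
        by_contra hxBX
        have : x ∈ Bs ∩ X := hEq ▸ (⟨hxX, hxBX⟩ : x ∈ X \ BX)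
        exact hxBs this.1
      · exact Or.inr ⟨⟨hxE, hxBs⟩, hxE, hxX⟩
    · rintro (hx | ⟨hx, -⟩)
      · refine ⟨hX (hBX hx), fun hxBs => ?_⟩
        have : x ∈ X \ BX := hEq ▸ (⟨hxBs, hBX hx⟩ : x ∈ Bs ∩ X)
        exact this.2 hx
      · exact hx
  exact heq ▸ hbase

/-- Auxiliary: if `X \ BX` is a dual basis of `X`, then for every basis `B` of `M.E \ X`,
`BX ∪ B` is a base. -/
lemma aux_d (M : Matroid α) {X BX B : Set α} (hX : X ⊆ M.E) (hBX : BX ⊆ X)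
    (h : M✶.IsBasis (X \ BX) X) (hB : M.IsBasis B (M.E \ X)) : M.IsBase (BX ∪ B) := by
  obtain ⟨B₀, hB₀, hbase⟩ := aux_b M hX hBX h
  set T : Set α := BX ∪ B ∪ B₀ with hTdef
  have hBE : B ⊆ M.E \ X := hB.subset
  have hB₀E : B₀ ⊆ M.E \ X := hB₀.subset
  have hTE : T ⊆ M.E := by
    refine union_subset (union_subset (hBX.trans hX) (hBE.trans diff_subset))
      (hB₀E.trans diff_subset)
  have hJT : M.IsBasis (BX ∪ B₀) T :=
    hbase.isBasis_ground.isBasis_subset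
      (union_subset (subset_union_left.trans subset_union_left) subset_union_right) hTE
  obtain ⟨I', hI', hBI', hI'sub⟩ := hB.indep.exists_isBasis_subset_union_isBasis
    (subset_union_right.trans subset_union_left) hJT
  have hI'S : B = I' ∩ (M.E \ X) :=
    hB.eq_of_subset_indep (hI'.indep.subset inter_subset_left)
      (subset_inter hBI' hBE) inter_subset_right
  have hI'E : I' ⊆ M.E := hI'.indep.subset_ground
  set K : Set α := I' ∩ X with hKdef
  have hKBX : K ⊆ BX := by
    rintro x ⟨hx1, hx2⟩
    rcases hI'sub hx1 with h' | h'
    · exact absurd hx2 (hBE h').2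
    rcases h' with h'' | h''
    · exact h''
    · exact absurd hx2 (hB₀E h'').2
  have hI'eq : I' = K ∪ B := by
    ext x
    constructor
    · intro hx
      by_cases hxX : x ∈ X
      · exact Or.inl ⟨hx, hxX⟩
      · exact Or.inr (hI'S ▸ (⟨hx, hI'E hx, hxX⟩ : x ∈ I' ∩ (M.E \ X)))
    · rintro (⟨hx, -⟩ | hx)
      · exact hx
      · exact hBI' hx
  have hI'base : M.IsBase I' := isBasis_ground_iff.mp (hI'.transfer hJT hTE hbase.isBasis_ground)
  have hc : M✶.IsBasis (X \ K) X :=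
    aux_c M hX (hKBX.trans hBX) hB (hI'eq ▸ hI'base)
  have heq : X \ BX = X \ K :=
    h.eq_of_subset_indep hc.indep (diff_subset_diff_right hKBX) diff_subset
  have hKeq : K = BX := by
    apply subset_antisymm hKBX
    intro x hx
    by_contra hxK
    exact ((heq ▸ (⟨hBX hx, hxK⟩ : x ∈ X \ K)) : x ∈ X \ BX).2 hx
  rw [hI'eq, hKeq] at hI'base
  exact hI'base

theorem stmt12 (M : Matroid α) (X : Set α) (hX : X ⊆ M.E) (BX : Set α) (hBX : BX ⊆ X) :
    (((M✶ ↾ X)✶).IsBase BX ↔ ∃ B, (M ↾ (M.E \ X)).IsBase B ∧ M.IsBase (BX ∪ B)) ∧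
    (((M✶ ↾ X)✶).IsBase BX ↔ ∀ B, (M ↾ (M.E \ X)).IsBase B → M.IsBase (BX ∪ B)) := by
  have hXd : X ⊆ M✶.E := hX
  have hkey : ((M✶ ↾ X)✶).IsBase BX ↔ M✶.IsBasis (X \ BX) X := by
    rw [dual_isBase_iff (show BX ⊆ (M✶ ↾ X).E from hBX), restrict_ground_eq,
      isBase_restrict_iff hXd]
  have hrb : ∀ B : Set α, (M ↾ (M.E \ X)).IsBase B ↔ M.IsBasis B (M.E \ X) := by
    intro B
    rw [isBase_restrict_iff diff_subset]
  constructor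
  · rw [hkey]
    constructor
    · intro h
      obtain ⟨B, hB, hb⟩ := aux_b M hX hBX h
      exact ⟨B, (hrb B).mpr hB, hb⟩
    · rintro ⟨B, hB, hb⟩
      have hB' := (hrb B).mp hB
      have : X \ BX = X \ BX := rfl
      exact aux_c M hX hBX hB' hb
  · rw [hkey]
    constructor
    · intro h B hB
      exact aux_d M hX hBX h ((hrb B).mp hB)
    · intro h
      obtain ⟨B, hB⟩ := M.exists_isBasis (M.E \ X) diff_subset
      exact aux_c M hX hBX hB (h B ((hrb B).mpr hB))
end

section
/- For any (possibly infinite) matroid M and any subset X of its ground set, κ_M(X) = κ_{M*}(X), where κ is the connectivity function defined via bases. -/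
open Set Matroid

variable {α : Type*}

private lemma conn_dual_le_aux (M : Matroid α) (X : Set α) (hX : X ⊆ M.E) :
    conn M✶ X ≤ conn M X := by
  rw [conn, conn]
  refine le_iInf₂ fun BX hBX' => le_iInf₂ fun BY hBY' => le_sInf fun n hn => ?_
  obtain ⟨F, hFfin, hFsub, hFind, rfl⟩ := hn
  have hBX : M.IsBasis BX X := (isBase_restrict_iff hX).1 hBX'
  have hBY : M.IsBasis BY (M.E \ X) := (isBase_restrict_iff diff_subset).1 hBY'
  have hBXE : BX ⊆ M.E := hBX.indep.subset_ground
  have hBYE : BY ⊆ M.E := hBY.indep.subset_ground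
  have hBXX : BX ⊆ X := hBX.subset
  have hBYY : BY ⊆ M.E \ X := hBY.subset
  -- BX ∪ BY is spanning
  have hsp : M.Spanning (BX ∪ BY) := by
    rw [spanning_iff_closure_eq (union_subset hBXE hBYE),
      ← closure_union_closure_left_eq, hBX.closure_eq_closure,
      closure_union_closure_left_eq, ← closure_union_closure_right_eq,
      hBY.closure_eq_closure, closure_union_closure_right_eq,
      union_diff_cancel hX, closure_ground]
  -- a base B with (BX ∪ BY) \ F ⊆ B ⊆ BX ∪ BY
  obtain ⟨B, hBbasis, hIB⟩ :=
    hFind.subset_isBasis_of_subset diff_subset hsp.subset_ground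
  have hBsub : B ⊆ BX ∪ BY := hBbasis.subset
  have hB : M.IsBase B := hBbasis.indep.isBase_of_spanning
    ⟨by rw [hBbasis.closure_eq_closure, hsp.closure_eq], hBbasis.indep.subset_ground⟩
  have hF0F : (BX ∪ BY) \ B ⊆ F := fun e he => by
    by_contra heF
    exact he.2 (hIB ⟨he.1, heF⟩)
  have hF0fin : ((BX ∪ BY) \ B).Finite := hFfin.subset hF0F
  -- extend BY to a base B' inside BY ∪ B, and BX to B'' inside BX ∪ B
  obtain ⟨B', hB', hBYB', hB'sub⟩ := hBY.indep.exists_isBase_subset_union_isBase hB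
  obtain ⟨B'', hB'', hBXB'', hB''sub⟩ := hBX.indep.exists_isBase_subset_union_isBase hB
  -- B' ∩ (M.E \ X) = BY,  B'' ∩ X = BX
  have hB'Y : B' ∩ (M.E \ X) = BY := by
    refine subset_antisymm (fun e he => ?_) (subset_inter hBYB' hBYY)
    rcases hB'sub he.1 with h | h
    · exact h
    rcases hBsub h with h' | h'
    · exact absurd (hBXX h') he.2.2
    · exact h'
  have hB''X : B'' ∩ X = BX := by
    refine subset_antisymm (fun e he => ?_) (subset_inter hBXB'' hBXX)
    rcases hB''sub he.1 with h | h
    · exact h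
    rcases hBsub h with h' | h'
    · exact h'
    · exact absurd he.2 (hBYY h').2
  -- the dual bases
  have hCX : M✶.IsBasis ((M.E \ B') ∩ X) X := by
    have := hB'.compl_inter_isBasis_of_inter_isBasis (X := M.E \ X) (by rwa [hB'Y])
    rwa [diff_diff_cancel_left hX] at this
  have hCY : M✶.IsBasis ((M.E \ B'') ∩ (M.E \ X)) (M.E \ X) :=
    hB''.compl_inter_isBasis_of_inter_isBasis (X := X) (by rwa [hB''X])
  set CX := (M.E \ B') ∩ X with hCXdef
  set CY := (M.E \ B'') ∩ (M.E \ X) with hCYdef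
  set F' := (B \ B') ∪ (B \ B'') with hF'def
  -- cardinality bound
  have hs1 : B' \ B ⊆ BY \ B := fun e he =>
    ⟨(hB'sub he.1).resolve_right he.2, he.2⟩
  have hs2 : B'' \ B ⊆ BX \ B := fun e he =>
    ⟨(hB''sub he.1).resolve_right he.2, he.2⟩
  have hdisj : Disjoint (BX \ B) (BY \ B) :=
    Disjoint.mono diff_subset diff_subset
      (disjoint_sdiff_right.mono_left hBXX |>.mono_right hBYY)
  have hcard : F'.encard ≤ F.encard := by
    calc F'.encard ≤ (B \ B').encard + (B \ B'').encard := encard_union_le _ _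
      _ = (B' \ B).encard + (B'' \ B).encard := by
          rw [hB.encard_diff_comm hB', hB.encard_diff_comm hB'']
      _ ≤ (BY \ B).encard + (BX \ B).encard :=
          add_le_add (encard_le_encard hs1) (encard_le_encard hs2)
      _ = ((BX \ B) ∪ (BY \ B)).encard := by rw [encard_union_eq hdisj, add_comm]
      _ = ((BX ∪ BY) \ B).encard := by rw [union_diff_distrib]
      _ ≤ F.encard := encard_le_encard hF0F
  have hF'fin : F'.Finite :=
    encard_lt_top_iff.1 (lt_of_le_of_lt hcard hFfin.encard_lt_top)
  -- F' ⊆ CX ∪ CY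
  have hF'sub : F' ⊆ CX ∪ CY := by
    rintro e (he | he)
    · refine Or.inl ⟨⟨hB.subset_ground he.1, he.2⟩, ?_⟩
      rcases hBsub he.1 with h | h
      · exact hBXX h
      · exact absurd (hBYB' h) he.2
    · refine Or.inr ⟨⟨hB.subset_ground he.1, he.2⟩, ?_⟩
      rcases hBsub he.1 with h | h
      · exact absurd (hBXB'' h) he.2
      · exact hBYY h
  -- coindependence
  have hcoind : M✶.Indep ((CX ∪ CY) \ F') := by
    refine coindep_iff_exists'.2 ⟨⟨B, hB, fun e heB => ⟨hB.subset_ground heB, ?_⟩⟩, ?_⟩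
    · rintro ⟨(he | he), heF'⟩
      · by_cases heB' : e ∈ B'
        · exact he.1.2 heB'
        · exact heF' (Or.inl ⟨heB, heB'⟩)
      · by_cases heB'' : e ∈ B''
        · exact he.1.2 heB''
        · exact heF' (Or.inr ⟨heB, heB''⟩)
    · exact diff_subset.trans (union_subset (inter_subset_left.trans diff_subset)
        (inter_subset_left.trans diff_subset))
  have hCXbase : CX ∈ {C | (M✶ ↾ X).IsBase C} := by
    have hXd : X ⊆ M✶.E := by rwa [dual_ground]
    exact (isBase_restrict_iff hXd).2 hCX
  have hCYbase : CY ∈ {C | (M✶ ↾ (M✶.E \ X)).IsBase C} := by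
    rw [mem_setOf_eq, dual_ground]
    exact (isBase_restrict_iff diff_subset).2 hCY
  refine le_trans (iInf₂_le CX hCXbase) (le_trans (iInf₂_le CY hCYbase) (le_trans ?_ hcard))
  exact sInf_le ⟨F', hF'fin, hF'sub, hcoind, rfl⟩

theorem stmt13 (M : Matroid α) (X : Set α) (hX : X ⊆ M.E) :
    conn M X = conn M✶ X := by
  have h1 := conn_dual_le_aux M X hX
  have h2 := conn_dual_le_aux M✶ X (by rwa [dual_ground])
  rw [dual_dual] at h2
  exact le_antisymm h2 h1
end
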